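/- For every α > 0, Σ_{n≥1} P( max_{1≤m≤⌊1/H(n)⌋+1} |γ_1^n + ⋯ + γ_m^n − m H(n)| ≥ α ) < ∞, and consequently lim_{n→∞} max_{1≤m≤⌊1/H(n)⌋+1} |γ_1^n + ⋯ + γ_m^n − m H(n)| = 0 almost surely. -/

import Mathlib

open MeasureTheory ProbabilityTheory Filter

section Aux

lemma real_biSup_le' {f : ℕ → ℝ} {s : Finset ℕ} {a : ℝ} (ha : 0 ≤ a) (h : ∀ m ∈ s, f m ≤ a) :
    (⨆ m ∈ s, f m) ≤ a :=
  Real.iSup_le (fun m => Real.iSup_le (fun hm => h m hm) ha) ha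

lemma exists_of_le_biSup' {f : ℕ → ℝ} {s : Finset ℕ} {α : ℝ} (hα : 0 < α)
    (hf : ∀ m ∈ s, 0 ≤ f m) (h : α ≤ ⨆ m ∈ s, f m) : ∃ m ∈ s, α ≤ f m := by
  by_contra hc
  push_neg at hc
  rcases s.eq_empty_or_nonempty with rfl | hs
  · have h0 : (⨆ m ∈ (∅ : Finset ℕ), f m) ≤ 0 := real_biSup_le' le_rfl (by simp)
    linarith
  · obtain ⟨m₀, hm₀, he⟩ := Finset.exists_mem_eq_sup' hs f
    have hlt : s.sup' hs f < α := he ▸ hc m₀ hm₀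
    have hle : (⨆ m ∈ s, f m) ≤ s.sup' hs f :=
      real_biSup_le' (he ▸ hf m₀ hm₀) (fun m hm => Finset.le_sup' f hm)
    linarith

lemma iIndepFun_of_ae_eq' {Ω : Type*} {mΩ : MeasurableSpace Ω} {μ : Measure Ω}
    {f g : ℕ → Ω → ℝ} (hf : iIndepFun f μ)
    (h : ∀ i, f i =ᵐ[μ] g i) : iIndepFun g μ := by
  rw [ProbabilityTheory.iIndepFun_iff_measure_inter_preimage_eq_mul] at hf ⊢
  intro S sets hsets
  have hae : ∀ᵐ ω ∂μ, ∀ i, f i ω = g i ω := MeasureTheory.ae_all_iff.2 h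
  have h1 : ∀ i, μ (g i ⁻¹' sets i) = μ (f i ⁻¹' sets i) := fun i =>
    measure_congr (eventuallyEq_set.2 (by
      filter_upwards [h i] with ω hω
      simp only [Set.mem_preimage, hω]))
  have h2 : μ (⋂ i ∈ S, g i ⁻¹' sets i) = μ (⋂ i ∈ S, f i ⁻¹' sets i) :=
    measure_congr (eventuallyEq_set.2 (by
      filter_upwards [hae] with ω hω
      simp only [Set.mem_iInter, Set.mem_preimage, hω]))
  rw [h2, hf S hsets]
  exact Finset.prod_congr rfl fun i _ => (h1 i).symm

/-- **Kolmogorov's maximal inequality.** -/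
lemma kolmogorov_maximal_ineq' {Ω : Type*} [MeasureSpace Ω]
    [IsProbabilityMeasure (ℙ : Measure Ω)]
    (X : ℕ → Ω → ℝ) (hmeas : ∀ j, Measurable (X j))
    (hindep : iIndepFun X ℙ)
    (hL2 : ∀ j, MemLp (X j) 2 ℙ) (hmean : ∀ j, ∫ ω, X j ω ∂ℙ = 0)
    (M : ℕ) {α : ℝ} (hα : 0 < α) :
    α ^ 2 * (ℙ {ω | ∃ m < M, α ≤ |∑ j ∈ Finset.range (m + 1), X j ω|}).toReal
      ≤ ∑ j ∈ Finset.range M, variance (X j) ℙ := by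
  classical
  set S : ℕ → Ω → ℝ := fun m ω => ∑ j ∈ Finset.range m, X j ω with hSdef
  have hSmeas : ∀ m, Measurable (S m) := fun m =>
    Finset.measurable_sum _ fun j _ => hmeas j
  have hSL2 : ∀ m, MemLp (S m) 2 ℙ := by
    intro m
    have h := memLp_finset_sum' (Finset.range m) (fun j (_ : j ∈ Finset.range m) => hL2 j)
    convert h using 1
    ext ω
    simp [hSdef]
  have hSint : ∀ m, Integrable (S m) ℙ := fun m => (hSL2 m).integrable one_le_two
  set A : ℕ → Set Ω := fun m =>
    {ω | (∀ k < m, |S (k + 1) ω| < α) ∧ α ≤ |S (m + 1) ω|} with hAdef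
  have hAmeas : ∀ m, MeasurableSet (A m) := by
    intro m
    have : A m = (⋂ (k : ℕ), ⋂ (_ : k < m), {ω | |S (k + 1) ω| < α}) ∩
        {ω | α ≤ |S (m + 1) ω|} := by
      ext ω; simp [hAdef, Set.mem_iInter]
    rw [this]
    exact ((MeasurableSet.iInter fun k => MeasurableSet.iInter fun _ =>
      measurableSet_lt (hSmeas _).abs measurable_const)).inter
      (measurableSet_le measurable_const (hSmeas _).abs)
  have hdisj : ∀ m m', m < m' → Disjoint (A m) (A m') := by
    intro m m' hmm'
    rw [Set.disjoint_left]
    intro ω hm hm'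
    exact absurd hm.2 (not_le.2 (hm'.1 m hmm'))
  have hBeq : {ω | ∃ m < M, α ≤ |S (m + 1) ω|} = ⋃ m ∈ Finset.range M, A m := by
    ext ω
    simp only [Set.mem_setOf_eq, Set.mem_iUnion, Finset.mem_range, exists_prop]
    constructor
    · rintro ⟨m, hm, hαm⟩
      have hex : ∃ k, k < M ∧ α ≤ |S (k + 1) ω| := ⟨m, hm, hαm⟩
      refine ⟨Nat.find hex, (Nat.find_spec hex).1, ?_, (Nat.find_spec hex).2⟩
      intro l hl
      by_contra hcon
      push_neg at hcon
      exact Nat.find_min hex hl ⟨hl.trans (Nat.find_spec hex).1, hcon⟩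
    · rintro ⟨m, hm, hA⟩
      exact ⟨m, hm, hA.2⟩
  -- key estimate on each piece
  have key : ∀ m < M, α ^ 2 * (ℙ (A m)).toReal ≤ ∫ ω in A m, (S M ω) ^ 2 ∂ℙ := by
    intro m hm
    set T : Ω → ℝ := fun ω => ∑ j ∈ Finset.Ico (m + 1) M, X j ω with hTdef
    have hTmeas : Measurable T := Finset.measurable_sum _ fun j _ => hmeas j
    have hTL2 : MemLp T 2 ℙ := by
      have h := memLp_finset_sum' (Finset.Ico (m + 1) M)
        (fun j (_ : j ∈ Finset.Ico (m + 1) M) => hL2 j)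
      convert h using 1
      ext ω
      simp [hTdef]
    have hTint : Integrable T ℙ := hTL2.integrable one_le_two
    have hTmean : ∫ ω, T ω ∂ℙ = 0 := by
      rw [hTdef]
      rw [integral_finset_sum _ fun j _ => (hL2 j).integrable one_le_two]
      simp [hmean]
    have hsplit : ∀ ω, S M ω = S (m + 1) ω + T ω := by
      intro ω
      exact (Finset.sum_range_add_sum_Ico _ (by omega)).symm
    set Y : Ω → ℝ := (A m).indicator (S (m + 1)) with hYdef
    -- independence of Y and T
    have hYT : IndepFun Y T ℙ := by
      have base := hindep.indepFun_finset (Finset.range (m + 1)) (Finset.Ico (m + 1) M)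
        (by
          rw [Finset.disjoint_left]
          intro a ha hb
          simp only [Finset.mem_range] at ha
          simp only [Finset.mem_Ico] at hb
          omega) hmeas
      set s : ℕ → ((Finset.range (m + 1) : Finset ℕ) → ℝ) → ℝ :=
        fun k v => ∑ i : (Finset.range (m + 1) : Finset ℕ), if ((i : ℕ) < k) then v i else 0
        with hsdef
      have hsmeas : ∀ k, Measurable (s k) := by
        intro k
        apply Finset.measurable_sum
        intro i _
        by_cases h : ((i : ℕ) < k)
        · simpa [h] using measurable_pi_apply i
        · simp [h]
      have hs_eq : ∀ k, k ≤ m + 1 → ∀ ω,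
          s k (fun i : (Finset.range (m + 1) : Finset ℕ) => X i ω) = S k ω := by
        intro k hk ω
        rw [hsdef]
        simp only
        rw [Finset.sum_coe_sort (Finset.range (m + 1))
          (fun i => if i < k then X i ω else 0)]
        rw [← Finset.sum_filter]
        have : (Finset.range (m + 1)).filter (· < k) = Finset.range k := by
          ext i; simp; omega
        rw [this]
      set cond : ((Finset.range (m + 1) : Finset ℕ) → ℝ) → Prop :=
        fun v => (∀ k < m, |s (k + 1) v| < α) ∧ α ≤ |s (m + 1) v| with hconddef
      have hcondmeas : MeasurableSet {v | cond v} := by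
        have : {v | cond v} = (⋂ (k : ℕ), ⋂ (_ : k < m), {v | |s (k + 1) v| < α}) ∩
            {v | α ≤ |s (m + 1) v|} := by
          ext v; simp [hconddef, Set.mem_iInter]
        rw [this]
        exact ((MeasurableSet.iInter fun k => MeasurableSet.iInter fun _ =>
          measurableSet_lt (hsmeas _).abs measurable_const)).inter
          (measurableSet_le measurable_const (hsmeas _).abs)
      set Φ : ((Finset.range (m + 1) : Finset ℕ) → ℝ) → ℝ :=
        Set.indicator {v | cond v} (s (m + 1)) with hΦdef
      have hΦmeas : Measurable Φ := (hsmeas (m + 1)).indicator hcondmeas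
      set Ψ : ((Finset.Ico (m + 1) M : Finset ℕ) → ℝ) → ℝ :=
        fun w => ∑ i : (Finset.Ico (m + 1) M : Finset ℕ), w i with hΨdef
      have hΨmeas : Measurable Ψ :=
        Finset.measurable_sum _ fun i _ => measurable_pi_apply i
      have hcomp := base.comp hΦmeas hΨmeas
      have hYeq : (Φ ∘ fun a (i : (Finset.range (m + 1) : Finset ℕ)) => X i a) = Y := by
        funext ω
        simp only [Function.comp_apply, hΦdef, hYdef]
        by_cases hω : ω ∈ A m
        · have hc : cond (fun i : (Finset.range (m + 1) : Finset ℕ) => X i ω) := by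
            refine ⟨fun k hk => ?_, ?_⟩
            · rw [hs_eq (k + 1) (by omega) ω]; exact hω.1 k hk
            · rw [hs_eq (m + 1) le_rfl ω]; exact hω.2
          have hc' : (fun i : (Finset.range (m + 1) : Finset ℕ) => X i ω) ∈ {v | cond v} := hc
          rw [Set.indicator_of_mem hc', Set.indicator_of_mem hω, hs_eq (m + 1) le_rfl ω]
        · have hc : ¬ cond (fun i : (Finset.range (m + 1) : Finset ℕ) => X i ω) := by
            intro hc
            apply hω
            refine ⟨fun k hk => ?_, ?_⟩
            · have := hc.1 k hk; rwa [hs_eq (k + 1) (by omega) ω] at this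
            · have := hc.2; rwa [hs_eq (m + 1) le_rfl ω] at this
          have hc' : (fun i : (Finset.range (m + 1) : Finset ℕ) => X i ω) ∉ {v | cond v} := hc
          rw [Set.indicator_of_notMem hc', Set.indicator_of_notMem hω]
      have hTeq : (Ψ ∘ fun a (i : (Finset.Ico (m + 1) M : Finset ℕ)) => X i a) = T := by
        funext ω
        simp only [Function.comp_apply, hΨdef, hTdef]
        exact Finset.sum_coe_sort (Finset.Ico (m + 1) M) (fun i => X i ω)
      rwa [hYeq, hTeq] at hcomp
    -- integrability facts
    have hYL2 : MemLp Y 2 ℙ := MemLp.indicator (hAmeas m) (hSL2 (m + 1))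
    have hYint : Integrable Y ℙ := hYL2.integrable one_le_two
    have hYsq : Integrable (fun ω => Y ω ^ 2) ℙ := hYL2.integrable_sq
    have hYTint : Integrable (fun ω => Y ω * T ω) ℙ := hYT.integrable_mul hYint hTint
    have hTsqind : Integrable ((A m).indicator (fun ω => T ω ^ 2)) ℙ :=
      (hTL2.integrable_sq).indicator (hAmeas m)
    -- pointwise decomposition
    have hpt : ∀ ω, (A m).indicator (fun ω => (S M ω) ^ 2) ω
        = Y ω ^ 2 + 2 * (Y ω * T ω) + (A m).indicator (fun ω => T ω ^ 2) ω := by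
      intro ω
      by_cases hω : ω ∈ A m
      · simp only [Set.indicator_of_mem hω, hYdef]
        rw [hsplit ω]; ring
      · simp [Set.indicator_of_notMem hω, hYdef]
    -- expectation of the cross term vanishes
    have hcross : ∫ ω, Y ω * T ω ∂ℙ = 0 := by
      rw [show (fun ω => Y ω * T ω) = Y * T from rfl] at hYTint ⊢
      rw [hYT.integral_mul_eq_mul_integral hYint.aestronglyMeasurable hTint.aestronglyMeasurable, hTmean, mul_zero]
    -- the first term dominates α² ℙ(A m)
    have hfirst : α ^ 2 * (ℙ (A m)).toReal ≤ ∫ ω, Y ω ^ 2 ∂ℙ := by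
      have hYsq_eq : ∀ ω, Y ω ^ 2 = (A m).indicator (fun ω => (S (m + 1) ω) ^ 2) ω := by
        intro ω
        by_cases hω : ω ∈ A m <;>
          simp [hYdef, Set.indicator_of_mem, Set.indicator_of_notMem, hω]
      calc α ^ 2 * (ℙ (A m)).toReal
          ≤ ∫ ω in A m, (S (m + 1) ω) ^ 2 ∂ℙ := by
            rw [mul_comm, ← smul_eq_mul]
            apply setIntegral_ge_of_const_le (hAmeas m) (measure_ne_top _ _)
            · intro ω hω
              have h2 := hω.2
              calc α ^ 2 ≤ |S (m + 1) ω| ^ 2 := by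
                    apply pow_le_pow_left₀ hα.le h2
                _ = (S (m + 1) ω) ^ 2 := sq_abs _
            · exact (hSL2 (m + 1)).integrable_sq.integrableOn
        _ = ∫ ω, Y ω ^ 2 ∂ℙ := by
            rw [← integral_indicator (hAmeas m)]
            exact integral_congr_ae (Filter.Eventually.of_forall fun ω => (hYsq_eq ω).symm)
    -- put everything together
    have hdecomp : ∫ ω in A m, (S M ω) ^ 2 ∂ℙ
        = (∫ ω, Y ω ^ 2 ∂ℙ) + 2 * (∫ ω, Y ω * T ω ∂ℙ)
          + ∫ ω, (A m).indicator (fun ω => T ω ^ 2) ω ∂ℙ := by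
      rw [← integral_indicator (hAmeas m)]
      rw [integral_congr_ae (Filter.Eventually.of_forall hpt)]
      rw [integral_add (by exact hYsq.add (hYTint.const_mul 2)) hTsqind,
        integral_add hYsq (hYTint.const_mul 2), integral_const_mul]
    have hthird : 0 ≤ ∫ ω, (A m).indicator (fun ω => T ω ^ 2) ω ∂ℙ := by
      apply integral_nonneg
      intro ω
      exact Set.indicator_nonneg (fun ω _ => sq_nonneg _) ω
    rw [hdecomp, hcross]
    linarith
  -- sum it all up
  rw [hBeq]
  have hmeasure_sum : (ℙ (⋃ m ∈ Finset.range M, A m)).toReal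
      = ∑ m ∈ Finset.range M, (ℙ (A m)).toReal := by
    rw [measure_biUnion_finset ?hd (fun m _ => hAmeas m)]
    · exact ENNReal.toReal_sum fun m _ => measure_ne_top _ _
    case hd =>
      intro m hm' m' hm'' hne
      rcases lt_or_gt_of_ne hne with h | h
      · exact hdisj _ _ h
      · exact (hdisj _ _ h).symm
  rw [hmeasure_sum, Finset.mul_sum]
  calc ∑ m ∈ Finset.range M, α ^ 2 * (ℙ (A m)).toReal
      ≤ ∑ m ∈ Finset.range M, ∫ ω in A m, (S M ω) ^ 2 ∂ℙ :=
        Finset.sum_le_sum fun m hm => key m (Finset.mem_range.1 hm)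
    _ = ∫ ω in ⋃ m ∈ Finset.range M, A m, (S M ω) ^ 2 ∂ℙ := by
        rw [integral_biUnion_finset (Finset.range M) (fun m _ => hAmeas m)]
        · intro m _ m' _ hne
          rcases lt_or_gt_of_ne hne with h | h
          · exact hdisj _ _ h
          · exact (hdisj _ _ h).symm
        · exact fun m _ => (hSL2 M).integrable_sq.integrableOn
    _ ≤ ∫ ω, (S M ω) ^ 2 ∂ℙ := by
        apply setIntegral_le_integral (hSL2 M).integrable_sq
        exact Filter.Eventually.of_forall fun ω => sq_nonneg _
    _ = ∑ j ∈ Finset.range M, variance (X j) ℙ := by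
        have hSmean : ∫ ω, S M ω ∂ℙ = 0 := by
          rw [hSdef]
          simp only
          rw [integral_finset_sum _ fun j _ => (hL2 j).integrable one_le_two]
          simp [hmean]
        have hvar := variance_eq_sub (hSL2 M)
        have hsum_eq : S M = ∑ j ∈ Finset.range M, X j := by
          funext ω; simp [hSdef]
        have hvarsum : variance (S M) ℙ = ∑ j ∈ Finset.range M, variance (X j) ℙ := by
          rw [hsum_eq]
          exact IndepFun.variance_sum (fun j _ => hL2 j)
            (fun j _ k _ hjk => hindep.indepFun hjk)
        rw [← hvarsum, hvar, hSmean]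
        simp [Pi.pow_apply]

end Aux

/-- Let `β : ℕ → (0,∞)` be summable, `μ > 0`, `C > 0`, and
`H n = β n * μ`. For each `n`, let `(γ n j)_{j ≥ 1}` be independent random variables
with mean `H n` and variance at most `C * β n ^ 2`. Then for every `α > 0` the series
`Σ_n P(max_{1 ≤ m ≤ ⌊1/H n⌋ + 1} |γ_1^n + ⋯ + γ_m^n − m H n| ≥ α)` converges, and
consequently the maxima tend to `0` almost surely. -/
theorem strong_convergence_of_partial_sum_maxima
    {Ω : Type*} [MeasureSpace Ω] [IsProbabilityMeasure (ℙ : Measure Ω)]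
    (β : ℕ → ℝ) (hβpos : ∀ n, 0 < β n) (hβsum : Summable β)
    (μ C : ℝ) (hμ : 0 < μ) (hC : 0 < C)
    (H : ℕ → ℝ) (hH : ∀ n, H n = β n * μ)
    (γ : ℕ → ℕ → Ω → ℝ)
    (hindep : ∀ n, iIndepFun (fun j => γ n (j + 1)) ℙ)
    (hmem : ∀ n, ∀ j, 1 ≤ j → MemLp (γ n j) 2 ℙ)
    (hmean : ∀ n, ∀ j, 1 ≤ j → ∫ ω, γ n j ω ∂ℙ = H n)
    (hvar : ∀ n, ∀ j, 1 ≤ j → variance (γ n j) ℙ ≤ C * β n ^ 2) :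
    (∀ α : ℝ, 0 < α →
      Summable fun n =>
        (ℙ {ω | α ≤ ⨆ m ∈ Finset.Icc 1 (⌊1 / H n⌋₊ + 1),
            |(∑ j ∈ Finset.Icc 1 m, γ n j ω) - (m : ℝ) * H n|}).toReal) ∧
    (∀ᵐ ω ∂ℙ, Tendsto (fun n => ⨆ m ∈ Finset.Icc 1 (⌊1 / H n⌋₊ + 1),
        |(∑ j ∈ Finset.Icc 1 m, γ n j ω) - (m : ℝ) * H n|) atTop (nhds 0)) := by
  classical
  have hHpos : ∀ n, 0 < H n := fun n => by rw [hH n]; exact mul_pos (hβpos n) hμ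
  -- The per-`n` probability bound
  have key : ∀ (α : ℝ), 0 < α → ∀ n : ℕ,
      (ℙ {ω | α ≤ ⨆ m ∈ Finset.Icc 1 (⌊1 / H n⌋₊ + 1),
          |(∑ j ∈ Finset.Icc 1 m, γ n j ω) - (m : ℝ) * H n|})
        ≤ ENNReal.ofReal (((⌊1 / H n⌋₊ + 1 : ℕ) : ℝ) * (C * β n ^ 2) / α ^ 2) := by
    intro α hα n
    set M : ℕ := ⌊1 / H n⌋₊ + 1 with hMdef
    have hasm : ∀ j : ℕ, AEStronglyMeasurable (γ n (j + 1)) ℙ :=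
      fun j => (hmem n (j + 1) (by omega)).1
    set g : ℕ → Ω → ℝ := fun j => (hasm j).mk _ with hgdef
    have hgmeas : ∀ j, Measurable (g j) :=
      fun j => (hasm j).stronglyMeasurable_mk.measurable
    have hgae : ∀ j, γ n (j + 1) =ᵐ[ℙ] g j := fun j => (hasm j).ae_eq_mk
    have hgL2 : ∀ j, MemLp (g j) 2 ℙ :=
      fun j => (hmem n (j + 1) (by omega)).ae_eq (hgae j)
    have hgmean : ∀ j, ∫ ω, g j ω ∂ℙ = H n := by
      intro j
      rw [← integral_congr_ae (hgae j)]
      exact hmean n (j + 1) (by omega)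
    set X : ℕ → Ω → ℝ := fun j ω => g j ω - H n with hXdef
    have hXmeas : ∀ j, Measurable (X j) :=
      fun j => (hgmeas j).sub measurable_const
    have hXindep : iIndepFun X ℙ := by
      have h1 : iIndepFun g ℙ :=
        iIndepFun_of_ae_eq' (hindep n) hgae
      exact h1.comp (fun _ x => x - H n) (fun _ => measurable_id.sub measurable_const)
    have hXL2 : ∀ j, MemLp (X j) 2 ℙ := fun j => (hgL2 j).sub (memLp_const _)
    have hXmean : ∀ j, ∫ ω, X j ω ∂ℙ = 0 := by
      intro j
      rw [hXdef]
      simp only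
      rw [integral_sub ((hgL2 j).integrable one_le_two) (integrable_const _)]
      simp [hgmean j]
    have hXvar : ∀ j, variance (X j) ℙ ≤ C * β n ^ 2 := by
      intro j
      have hev : evariance (X j) ℙ = evariance (γ n (j + 1)) ℙ := by
        rw [evariance, evariance]
        apply lintegral_congr_ae
        filter_upwards [hgae j] with ω hω
        rw [hXmean j, hmean n (j + 1) (by omega), hXdef]
        simp [hω]
      have h1 : variance (X j) ℙ = variance (γ n (j + 1)) ℙ := by
        rw [variance, variance, hev]
      rw [h1]
      exact hvar n (j + 1) (by omega)
    have hkol := kolmogorov_maximal_ineq' X hXmeas hXindep hXL2 hXmean M hα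
    have hvar_bound : ∑ j ∈ Finset.range M, variance (X j) ℙ
        ≤ (M : ℝ) * (C * β n ^ 2) := by
      calc ∑ j ∈ Finset.range M, variance (X j) ℙ
          ≤ ∑ _j ∈ Finset.range M, (C * β n ^ 2) :=
            Finset.sum_le_sum fun j _ => hXvar j
        _ = (M : ℝ) * (C * β n ^ 2) := by
            rw [Finset.sum_const, Finset.card_range, nsmul_eq_mul]
    -- relate the events
    have hae_all : ∀ᵐ ω ∂ℙ, ∀ j, γ n (j + 1) ω = g j ω := MeasureTheory.ae_all_iff.2 hgae
    have hsum_eq : ∀ᵐ ω ∂ℙ, ∀ m : ℕ,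
        (∑ j ∈ Finset.Icc 1 m, γ n j ω) = ∑ j ∈ Finset.range m, g j ω := by
      filter_upwards [hae_all] with ω hω
      intro m
      have h1 : ∑ j ∈ Finset.Icc 1 m, γ n j ω = ∑ j ∈ Finset.range m, γ n (j + 1) ω := by
        rw [← Finset.Ico_add_one_right_eq_Icc, Finset.sum_Ico_eq_sum_range]
        exact Finset.sum_congr rfl fun j _ => by rw [add_comm 1 j]
      rw [h1]
      exact Finset.sum_congr rfl fun j _ => hω j
    have hset1 : {ω | α ≤ ⨆ m ∈ Finset.Icc 1 M,
          |(∑ j ∈ Finset.Icc 1 m, γ n j ω) - (m : ℝ) * H n|}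
        =ᵐ[ℙ] {ω | α ≤ ⨆ m ∈ Finset.Icc 1 M,
          |(∑ j ∈ Finset.range m, g j ω) - (m : ℝ) * H n|} := by
      apply eventuallyEq_set.2
      filter_upwards [hsum_eq] with ω hω
      have hGeq : (⨆ m ∈ Finset.Icc 1 M,
            |(∑ j ∈ Finset.Icc 1 m, γ n j ω) - (m : ℝ) * H n|)
          = ⨆ m ∈ Finset.Icc 1 M,
            |(∑ j ∈ Finset.range m, g j ω) - (m : ℝ) * H n| := by
        apply iSup_congr
        intro m
        apply iSup_congr
        intro _
        rw [hω m]
      simp only [Set.mem_setOf_eq, hGeq]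
    have hsubset : {ω | α ≤ ⨆ m ∈ Finset.Icc 1 M,
          |(∑ j ∈ Finset.range m, g j ω) - (m : ℝ) * H n|}
        ⊆ {ω | ∃ m < M, α ≤ |∑ j ∈ Finset.range (m + 1), X j ω|} := by
      intro ω hω
      obtain ⟨m, hm, hαm⟩ := exists_of_le_biSup' hα (fun m _ => abs_nonneg _) hω
      simp only [Finset.mem_Icc] at hm
      refine ⟨m - 1, by omega, ?_⟩
      have hm1 : m - 1 + 1 = m := by omega
      rw [hm1]
      have hXsum : ∑ j ∈ Finset.range m, X j ω
          = (∑ j ∈ Finset.range m, g j ω) - (m : ℝ) * H n := by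
        rw [hXdef]
        simp only
        rw [Finset.sum_sub_distrib, Finset.sum_const, Finset.card_range, nsmul_eq_mul]
      rw [hXsum]
      exact hαm
    have hprob_le : (ℙ {ω | α ≤ ⨆ m ∈ Finset.Icc 1 M,
          |(∑ j ∈ Finset.Icc 1 m, γ n j ω) - (m : ℝ) * H n|})
        ≤ ℙ {ω | ∃ m < M, α ≤ |∑ j ∈ Finset.range (m + 1), X j ω|} := by
      rw [measure_congr hset1]
      exact measure_mono hsubset
    have htoReal : (ℙ {ω | ∃ m < M, α ≤ |∑ j ∈ Finset.range (m + 1), X j ω|}).toReal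
        ≤ (M : ℝ) * (C * β n ^ 2) / α ^ 2 := by
      rw [div_eq_inv_mul, ← mul_le_mul_iff_of_pos_left (by positivity : (0:ℝ) < α ^ 2)]
      rw [← mul_assoc, mul_inv_cancel₀ (by positivity : (α:ℝ) ^ 2 ≠ 0), one_mul]
      exact hkol.trans hvar_bound
    calc (ℙ {ω | α ≤ ⨆ m ∈ Finset.Icc 1 M,
          |(∑ j ∈ Finset.Icc 1 m, γ n j ω) - (m : ℝ) * H n|})
        ≤ ℙ {ω | ∃ m < M, α ≤ |∑ j ∈ Finset.range (m + 1), X j ω|} := hprob_le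
      _ = ENNReal.ofReal ((ℙ {ω | ∃ m < M,
            α ≤ |∑ j ∈ Finset.range (m + 1), X j ω|}).toReal) :=
          (ENNReal.ofReal_toReal (measure_ne_top _ _)).symm
      _ ≤ ENNReal.ofReal ((M : ℝ) * (C * β n ^ 2) / α ^ 2) :=
          ENNReal.ofReal_le_ofReal htoReal
  -- Summability of the bounding sequence
  set K : ℝ := ∑' n, β n with hKdef
  have hβK : ∀ n, β n ≤ K := fun n =>
    Summable.le_tsum hβsum n (fun j _ => (hβpos j).le)
  have hbound_le : ∀ (α : ℝ), 0 < α → ∀ n,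
      ((⌊1 / H n⌋₊ + 1 : ℕ) : ℝ) * (C * β n ^ 2) / α ^ 2
        ≤ (C * (1 / μ + K) / α ^ 2) * β n := by
    intro α hα n
    have hfloor : ((⌊1 / H n⌋₊ : ℕ) : ℝ) ≤ 1 / H n :=
      Nat.floor_le (one_div_nonneg.2 (hHpos n).le)
    have hM_le : ((⌊1 / H n⌋₊ + 1 : ℕ) : ℝ) ≤ 1 / (β n * μ) + 1 := by
      push_cast
      rw [← hH n]
      linarith
    have hβn := hβpos n
    have h2 : ((⌊1 / H n⌋₊ + 1 : ℕ) : ℝ) * β n ^ 2 ≤ β n / μ + β n ^ 2 := by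
      have := mul_le_mul_of_nonneg_right hM_le (sq_nonneg (β n))
      calc ((⌊1 / H n⌋₊ + 1 : ℕ) : ℝ) * β n ^ 2
          ≤ (1 / (β n * μ) + 1) * β n ^ 2 := this
        _ = β n / μ + β n ^ 2 := by field_simp
    have h3 : β n ^ 2 ≤ K * β n := by nlinarith [hβK n, (hβpos n).le]
    have h4 : ((⌊1 / H n⌋₊ + 1 : ℕ) : ℝ) * (C * β n ^ 2) ≤ (C * (1 / μ + K)) * β n := by
      have h5 : ((⌊1 / H n⌋₊ + 1 : ℕ) : ℝ) * β n ^ 2 ≤ β n / μ + K * β n := by linarith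
      calc ((⌊1 / H n⌋₊ + 1 : ℕ) : ℝ) * (C * β n ^ 2)
          = C * (((⌊1 / H n⌋₊ + 1 : ℕ) : ℝ) * β n ^ 2) := by ring
        _ ≤ C * (β n / μ + K * β n) := by
            exact mul_le_mul_of_nonneg_left h5 hC.le
        _ = (C * (1 / μ + K)) * β n := by field_simp
    calc ((⌊1 / H n⌋₊ + 1 : ℕ) : ℝ) * (C * β n ^ 2) / α ^ 2
        ≤ ((C * (1 / μ + K)) * β n) / α ^ 2 := by
          exact div_le_div_of_nonneg_right h4 (sq_nonneg α)
      _ = (C * (1 / μ + K) / α ^ 2) * β n := by ring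
  have hbound_nonneg : ∀ (α : ℝ) (n : ℕ),
      0 ≤ ((⌊1 / H n⌋₊ + 1 : ℕ) : ℝ) * (C * β n ^ 2) / α ^ 2 := by
    intro α n
    exact div_nonneg (mul_nonneg (Nat.cast_nonneg _)
      (mul_nonneg hC.le (sq_nonneg _))) (sq_nonneg α)
  have hbound_summable : ∀ (α : ℝ), 0 < α →
      Summable (fun n => ((⌊1 / H n⌋₊ + 1 : ℕ) : ℝ) * (C * β n ^ 2) / α ^ 2) := by
    intro α hα
    apply Summable.of_nonneg_of_le (hbound_nonneg α) (hbound_le α hα)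
    exact hβsum.mul_left _
  constructor
  · -- summability of the probabilities
    intro α hα
    apply Summable.of_nonneg_of_le (fun n => ENNReal.toReal_nonneg)
      (fun n => ?_) (hbound_summable α hα)
    exact ENNReal.toReal_le_of_le_ofReal (hbound_nonneg α n) (key α hα n)
  · -- almost-sure convergence via Borel–Cantelli
    have hBC : ∀ k : ℕ, ∀ᵐ ω ∂ℙ, ∀ᶠ n in atTop,
        ¬ (1 / ((k : ℝ) + 1) ≤ ⨆ m ∈ Finset.Icc 1 (⌊1 / H n⌋₊ + 1),
            |(∑ j ∈ Finset.Icc 1 m, γ n j ω) - (m : ℝ) * H n|) := by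
      intro k
      have hαk : (0 : ℝ) < 1 / ((k : ℝ) + 1) := by positivity
      have hsum_ne_top : (∑' n, ℙ {ω | 1 / ((k : ℝ) + 1) ≤
          ⨆ m ∈ Finset.Icc 1 (⌊1 / H n⌋₊ + 1),
            |(∑ j ∈ Finset.Icc 1 m, γ n j ω) - (m : ℝ) * H n|}) ≠ ⊤ := by
        have h1 : (∑' n, ℙ {ω | 1 / ((k : ℝ) + 1) ≤
            ⨆ m ∈ Finset.Icc 1 (⌊1 / H n⌋₊ + 1),
              |(∑ j ∈ Finset.Icc 1 m, γ n j ω) - (m : ℝ) * H n|})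
            ≤ ∑' n, ENNReal.ofReal (((⌊1 / H n⌋₊ + 1 : ℕ) : ℝ) * (C * β n ^ 2)
              / (1 / ((k : ℝ) + 1)) ^ 2) :=
          ENNReal.tsum_le_tsum (fun n => key _ hαk n)
        have h2 : (∑' n, ENNReal.ofReal (((⌊1 / H n⌋₊ + 1 : ℕ) : ℝ) * (C * β n ^ 2)
              / (1 / ((k : ℝ) + 1)) ^ 2)) ≠ ⊤ := by
          rw [← ENNReal.ofReal_tsum_of_nonneg (hbound_nonneg _) (hbound_summable _ hαk)]
          exact ENNReal.ofReal_ne_top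
        exact (h1.trans_lt (lt_top_iff_ne_top.2 h2)).ne
      have h0 := measure_setOf_frequently_eq_zero (p := fun n ω =>
          1 / ((k : ℝ) + 1) ≤ ⨆ m ∈ Finset.Icc 1 (⌊1 / H n⌋₊ + 1),
            |(∑ j ∈ Finset.Icc 1 m, γ n j ω) - (m : ℝ) * H n|) hsum_ne_top
      have hae : ∀ᵐ ω ∂ℙ, ¬ (∃ᶠ n in atTop,
          1 / ((k : ℝ) + 1) ≤ ⨆ m ∈ Finset.Icc 1 (⌊1 / H n⌋₊ + 1),
            |(∑ j ∈ Finset.Icc 1 m, γ n j ω) - (m : ℝ) * H n|) := by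
        rw [ae_iff]
        simpa only [not_not] using h0
      filter_upwards [hae] with ω hω
      exact Filter.not_frequently.1 hω
    have hall : ∀ᵐ ω ∂ℙ, ∀ k : ℕ, ∀ᶠ n in atTop,
        ¬ (1 / ((k : ℝ) + 1) ≤ ⨆ m ∈ Finset.Icc 1 (⌊1 / H n⌋₊ + 1),
            |(∑ j ∈ Finset.Icc 1 m, γ n j ω) - (m : ℝ) * H n|) :=
      MeasureTheory.ae_all_iff.2 hBC
    filter_upwards [hall] with ω hω
    have hGnn : ∀ n, 0 ≤ ⨆ m ∈ Finset.Icc 1 (⌊1 / H n⌋₊ + 1),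
        |(∑ j ∈ Finset.Icc 1 m, γ n j ω) - (m : ℝ) * H n| :=
      fun n => Real.iSup_nonneg fun m => Real.iSup_nonneg fun _ => abs_nonneg _
    rw [Metric.tendsto_atTop]
    intro ε hε
    obtain ⟨k, hk⟩ := exists_nat_one_div_lt hε
    obtain ⟨N, hN⟩ := Filter.eventually_atTop.1 (hω k)
    refine ⟨N, fun n hn => ?_⟩
    rw [Real.dist_eq, sub_zero, abs_of_nonneg (hGnn n)]
    have := hN n hn
    push_neg at this
    exact this.trans hk
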